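/- Let p ∈ (1,∞) with conjugate q. For real ψ₀, ψ₁, the inequality r·ψ₀ + s·ψ₁ ≤ |r^(1/p) − s^(1/p)|^p for all r, s > 0 holds if and only if ψ₀ < 1, ψ₁ < 1, and (1 − ψ₀^(q−1))(1 − ψ₁^(q−1)) ≥ 1, using the signed power convention x^a := sign(x)|x|^a. -/

import Mathlib

/-- Signed real power: `x^a := sign(x)·|x|^a`. -/
noncomputable def spow (x a : ℝ) : ℝ := if x < 0 then -((-x) ^ a) else x ^ a

open Real



lemma spow_of_nonneg {x : ℝ} (hx : 0 ≤ x) (a : ℝ) : spow x a = x ^ a := by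
  simp [spow, not_lt.2 hx]

lemma spow_of_neg {x : ℝ} (hx : x < 0) (a : ℝ) : spow x a = -((-x) ^ a) := by
  simp [spow, hx]

lemma spow_of_nonpos {x : ℝ} (hx : x ≤ 0) {a : ℝ} (ha : a ≠ 0) :
    spow x a = -((-x) ^ a) := by
  rcases lt_or_eq_of_le hx with h | h
  · exact spow_of_neg h a
  · subst h; simp [spow, Real.zero_rpow ha]

lemma spow_one_exp (x : ℝ) : spow x 1 = x := by
  rcases lt_or_ge x 0 with h | h
  · rw [spow_of_neg h, Real.rpow_one]; ring
  · rw [spow_of_nonneg h, Real.rpow_one]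

lemma spow_spow {x c : ℝ} (hc : 0 < c) (d : ℝ) :
    spow (spow x c) d = spow x (c * d) := by
  rcases lt_trichotomy x 0 with h | h | h
  · have hx' : (0:ℝ) ≤ -x := by linarith
    have h1 : 0 < (-x) ^ c := Real.rpow_pos_of_pos (by linarith) c
    rw [spow_of_neg h, spow_of_neg h, spow_of_neg (by linarith : -((-x)^c) < 0),
        neg_neg, ← Real.rpow_mul hx']
  · subst h
    by_cases hd : d = 0
    · simp [hd, spow, Real.zero_rpow hc.ne', Real.rpow_zero]
    · simp [spow, Real.zero_rpow hc.ne', Real.zero_rpow hd,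
        Real.zero_rpow (mul_ne_zero hc.ne' hd)]
  · have hx : (0:ℝ) ≤ x := h.le
    rw [spow_of_nonneg hx, spow_of_nonneg (Real.rpow_nonneg hx c),
        spow_of_nonneg hx, Real.rpow_mul hx]

lemma spow_mono {c : ℝ} (hc : 0 < c) : Monotone (fun x => spow x c) := by
  intro x y hxy
  show spow x c ≤ spow y c
  rcases lt_or_ge x 0 with hx | hx
  · rcases lt_or_ge y 0 with hy | hy
    · simp only [spow_of_neg hx, spow_of_neg hy, neg_le_neg_iff]
      exact Real.rpow_le_rpow (by linarith) (by linarith) hc.le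
    · rw [spow_of_neg hx, spow_of_nonneg hy]
      have := Real.rpow_pos_of_pos (by linarith : (0:ℝ) < -x) c
      have := Real.rpow_nonneg hy c
      linarith
  · rw [spow_of_nonneg hx, spow_of_nonneg (le_trans hx hxy)]
    exact Real.rpow_le_rpow hx hxy hc.le

lemma spow_lt_one {x c : ℝ} (hx : x < 1) (hc : 0 < c) : spow x c < 1 := by
  rcases lt_or_ge x 0 with h | h
  · rw [spow_of_neg h]
    have := Real.rpow_pos_of_pos (by linarith : (0:ℝ) < -x) c
    linarith
  · rw [spow_of_nonneg h]
    rcases eq_or_lt_of_le h with h0 | h0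
    · rw [← h0, Real.zero_rpow hc.ne']; norm_num
    · exact Real.rpow_lt_one h hx hc

lemma spow_mul_rpow {x y c : ℝ} (hy : 0 ≤ y) (hc : c ≠ 0) :
    spow (x * y) c = spow x c * y ^ c := by
  rcases eq_or_lt_of_le hy with h0 | h0
  · rw [← h0, mul_zero]
    rw [spow_of_nonneg le_rfl, Real.zero_rpow hc, mul_zero]
  rcases lt_or_ge x 0 with h | h
  · rw [spow_of_neg h, spow_of_neg (mul_neg_of_neg_of_pos h h0),
      show -(x*y) = (-x)*y by ring, Real.mul_rpow (by linarith) hy, neg_mul]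
  · rw [spow_of_nonneg h, spow_of_nonneg (mul_nonneg h hy), Real.mul_rpow h hy]


lemma key_ge_one (p : ℝ) (hp : 1 < p) {a x y : ℝ} (ha : 1 ≤ a) (hx : 0 < x) (hy : 0 < y) :
    x ^ p * spow (1 - a) (p - 1) + y ^ p * spow (1 - 1/a) (p - 1) ≤ |x - y| ^ p := by
  have hp1 : (0:ℝ) < p - 1 := by linarith
  have ha0 : (0:ℝ) < a := by linarith
  have hca : a * (1/a) = 1 := by field_simp
  have hinv : 1/a ≤ 1 := by rw [div_le_one ha0]; exact ha
  have h1a : (0:ℝ) ≤ 1 - 1/a := by linarith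
  rw [spow_of_nonpos (by linarith : 1 - a ≤ 0) hp1.ne', spow_of_nonneg h1a,
    show -(1-a) = a - 1 by ring]
  have habs : (0:ℝ) ≤ |x - y| ^ p := Real.rpow_nonneg (abs_nonneg _) p
  rcases le_or_gt y x with hxy | hxy
  · have h1 : (1 - 1/a) ^ (p-1) ≤ (a-1) ^ (p-1) := by
      apply Real.rpow_le_rpow h1a _ hp1.le
      nlinarith [sq_nonneg (a-1)]
    have h2 : y ^ p ≤ x ^ p := Real.rpow_le_rpow hy.le hxy (by linarith)
    have h3 : y ^ p * (1 - 1/a) ^ (p-1) ≤ x ^ p * (a-1) ^ (p-1) :=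
      mul_le_mul h2 h1 (Real.rpow_nonneg h1a _) (Real.rpow_nonneg (by linarith) _)
    linarith
  · rcases eq_or_lt_of_le ha with h1 | h1
    · rw [← h1]
      norm_num [Real.zero_rpow hp1.ne']
      exact habs
    -- a > 1, x < y : convexity
    have hxy' : |x - y| = y - x := by rw [abs_of_neg (by linarith : x - y < 0), neg_sub]
    rw [hxy']
    set l : ℝ := (a-1)/a with hl
    set m : ℝ := 1/a with hm
    have hl0 : 0 < l := div_pos (by linarith) ha0
    have hm0 : 0 < m := by positivity
    have hlm : l + m = 1 := by rw [hl, hm]; field_simp; ring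
    have hleq : 1 - m = l := by linarith
    have hLpos : (0:ℝ) < l ^ (p-1) := Real.rpow_pos_of_pos hl0 _
    have hMpos : (0:ℝ) < m ^ (p-1) := Real.rpow_pos_of_pos hm0 _
    have hdiv : a - 1 = l / m := by rw [hl, hm]; field_simp
    have hA : (a-1)^(p-1) = l^(p-1) / m^(p-1) := by
      rw [hdiv, Real.div_rpow hl0.le hm0.le]
    rw [hleq, hA]
    have hcvx := (convexOn_rpow hp.le).2 (Set.mem_Ici.2 (div_nonneg (by linarith : (0:ℝ) ≤ y - x) hl0.le))
      (Set.mem_Ici.2 (div_nonneg hx.le hm0.le)) hl0.le hm0.le hlm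
    simp only [smul_eq_mul] at hcvx
    have hyy : l * ((y-x)/l) + m * (x/m) = y := by field_simp; ring
    rw [hyy] at hcvx
    have hd1 : ((y-x)/l) ^ p = (y-x)^p / l^p := Real.div_rpow (by linarith) hl0.le p
    have hd2 : (x/m) ^ p = x^p / m^p := Real.div_rpow hx.le hm0.le p
    rw [hd1, hd2] at hcvx
    have hlp : l^(p-1) * l = l^p := by
      nth_rewrite 2 [show p = (p-1)+1 by ring]
      rw [Real.rpow_add_one hl0.ne']
    have hmp : m^(p-1) * m = m^p := by
      nth_rewrite 2 [show p = (p-1)+1 by ring]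
      rw [Real.rpow_add_one hm0.ne']
    have e1 : l * ((y-x)^p / l^p) * l^(p-1) = (y-x)^p := by
      rw [← hlp]; field_simp
    have e2 : m * (x^p / m^p) * l^(p-1) = x^p * (l^(p-1)/m^(p-1)) := by
      rw [← hmp]; field_simp
    have final := mul_le_mul_of_nonneg_right hcvx hLpos.le
    rw [add_mul, e1, e2] at final
    linarith


lemma key_lem (p : ℝ) (hp : 1 < p) {a x y : ℝ} (ha : 0 < a) (hx : 0 < x) (hy : 0 < y) :
    x ^ p * spow (1 - a) (p - 1) + y ^ p * spow (1 - 1/a) (p - 1) ≤ |x - y| ^ p := by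
  rcases le_or_gt 1 a with h | h
  · exact key_ge_one p hp h hx hy
  · have h' : 1 ≤ 1/a := by rw [le_div_iff₀ ha]; linarith
    have h2 := key_ge_one p hp h' hy hx
    rw [one_div_one_div, abs_sub_comm] at h2
    linarith

lemma pow_sub_bound (p : ℝ) (hp : 1 < p) {x : ℝ} (hx : 1 < x) :
    (x-1) ^ p + p * (x-1) ^ (p-1) ≤ x ^ p := by
  have h1 : (0:ℝ) < x - 1 := by linarith
  have hb := one_add_mul_self_le_rpow_one_add
      (le_trans (by norm_num) (le_of_lt (by positivity : (0:ℝ) < 1/(x-1)))) hp.le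
  have he : (1 : ℝ) + 1/(x-1) = x / (x-1) := by field_simp; ring
  rw [he, Real.div_rpow (by linarith) h1.le] at hb
  have hxp : (0:ℝ) < (x-1)^p := Real.rpow_pos_of_pos h1 p
  have hbb := mul_le_mul_of_nonneg_right hb hxp.le
  rw [div_mul_cancel₀ _ hxp.ne'] at hbb
  have hsp : (x-1)^(p-1) * (x-1) = (x-1)^p := by
    nth_rewrite 2 [show p = (p-1)+1 by ring]
    rw [Real.rpow_add_one h1.ne']
  have he2 : (1 + p*(1/(x-1))) * (x-1)^p = (x-1)^p + p*(x-1)^(p-1) := by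
    rw [← hsp]; field_simp
  linarith [he2 ▸ hbb]

lemma forward_step (p : ℝ) (hp : 1 < p) (a : ℝ) :
    |1 - a| ^ p - spow (1-a) (p-1) = a * spow (a-1) (p-1) := by
  have hp1 : (0:ℝ) < p - 1 := by linarith
  rcases lt_trichotomy a 1 with h | h | h
  · rw [abs_of_pos (by linarith : (0:ℝ) < 1 - a), spow_of_nonneg (by linarith : (0:ℝ) ≤ 1-a),
      spow_of_nonpos (by linarith : a - 1 ≤ 0) hp1.ne', show -(a-1) = 1-a by ring]
    have hsp : (1-a)^(p-1) * (1-a) = (1-a)^p := by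
      nth_rewrite 2 [show p = (p-1)+1 by ring]
      rw [Real.rpow_add_one (by linarith : (1:ℝ) - a ≠ 0)]
    rw [← hsp]; ring
  · subst h
    simp [spow, Real.zero_rpow hp1.ne', Real.zero_rpow (by linarith : p ≠ 0)]
  · rw [abs_of_neg (by linarith : (1:ℝ) - a < 0), spow_of_nonpos (by linarith : 1 - a ≤ 0) hp1.ne',
      spow_of_nonneg (by linarith : (0:ℝ) ≤ a-1), show -(1-a) = a-1 by ring]
    have hsp : (a-1)^(p-1) * (a-1) = (a-1)^p := by
      nth_rewrite 2 [show p = (p-1)+1 by ring]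
      rw [Real.rpow_add_one (by linarith : a - (1:ℝ) ≠ 0)]
    rw [← hsp]; ring

lemma psi0_lt_one (p : ℝ) (hp : 1 < p) {ψ₀ ψ₁ : ℝ}
    (h : ∀ r s : ℝ, 0 < r → 0 < s → r * ψ₀ + s * ψ₁ ≤ |r ^ (1 / p) - s ^ (1 / p)| ^ p) :
    ψ₀ < 1 := by
  by_contra hc
  push_neg at hc
  have hp0 : (0:ℝ) < p := by linarith
  have hp1 : (0:ℝ) < p - 1 := by linarith
  set M : ℝ := 1 + |ψ₁| with hM
  have hM1 : (1:ℝ) ≤ M := by simp [hM, abs_nonneg]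
  set x : ℝ := 1 + M ^ (1/(p-1)) with hxdef
  have hMrp : (0:ℝ) < M ^ (1/(p-1)) := Real.rpow_pos_of_pos (by linarith) _
  have hx1 : 1 < x := by simp only [hxdef]; linarith
  have hx0 : (0:ℝ) < x := by linarith
  have hxm : (x - 1) ^ (p-1) = M := by
    rw [hxdef, add_sub_cancel_left, ← Real.rpow_mul (by linarith : (0:ℝ) ≤ M),
      one_div_mul_cancel hp1.ne', Real.rpow_one]
  have hr : (0:ℝ) < x ^ p := Real.rpow_pos_of_pos hx0 p
  have hplug := h (x ^ p) 1 hr one_pos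
  rw [Real.one_rpow, ← Real.rpow_mul hx0.le, mul_one_div_cancel hp0.ne', Real.rpow_one,
    abs_of_pos (by linarith : (0:ℝ) < x - 1)] at hplug
  have hb := pow_sub_bound p hp hx1
  rw [hxm] at hb
  have h2 : x ^ p ≤ x ^ p * ψ₀ := le_mul_of_one_le_right hr.le hc
  have h3 : -ψ₁ ≤ |ψ₁| := neg_le_abs ψ₁
  nlinarith [hM1, hp1]

theorem mem_dual_Hp_iff (p q : ℝ) (hp : 1 < p) (hq : 1 / p + 1 / q = 1) (ψ₀ ψ₁ : ℝ) :
    (∀ r s : ℝ, 0 < r → 0 < s →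
        r * ψ₀ + s * ψ₁ ≤ |r ^ (1 / p) - s ^ (1 / p)| ^ p) ↔
      (ψ₀ < 1 ∧ ψ₁ < 1 ∧ 1 ≤ (1 - spow ψ₀ (q - 1)) * (1 - spow ψ₁ (q - 1))) := by
  have hp0 : (0:ℝ) < p := by linarith
  have hp1 : (0:ℝ) < p - 1 := by linarith
  have hqne : q ≠ 0 := by
    intro h
    rw [h, div_zero, add_zero] at hq
    have : p = 1 := by field_simp at hq; linarith
    linarith
  have hpq1 : (p-1) * (q-1) = 1 := by
    have h1 : p * q * (1/p + 1/q) = p * q * 1 := by rw [hq]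
    field_simp at h1
    nlinarith [h1]
  have hq1 : (0:ℝ) < q - 1 := by nlinarith [hpq1]
  constructor
  · intro h
    have h0 : ψ₀ < 1 := psi0_lt_one p hp h
    have h1 : ψ₁ < 1 := by
      apply psi0_lt_one p hp (ψ₁ := ψ₀)
      intro r s hr hs
      have := h s r hs hr
      rw [abs_sub_comm] at this
      linarith
    refine ⟨h0, h1, ?_⟩
    set A : ℝ := spow ψ₀ (q-1) with hA
    set B : ℝ := spow ψ₁ (q-1) with hB
    have hAlt : A < 1 := spow_lt_one h0 hq1
    set a : ℝ := 1 - A with ha'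
    have ha : (0:ℝ) < a := by simp only [ha']; linarith
    have hap : (0:ℝ) < a ^ p := Real.rpow_pos_of_pos ha p
    have hplug := h 1 (a ^ p) one_pos hap
    rw [Real.one_rpow, ← Real.rpow_mul ha.le, mul_one_div_cancel hp0.ne',
      Real.rpow_one] at hplug
    have hψ0 : spow (1-a) (p-1) = ψ₀ := by
      rw [show (1:ℝ) - a = A by rw [ha']; ring, hA, spow_spow hq1,
        show (q-1)*(p-1) = 1 by linarith [hpq1], spow_one_exp]
    have hfs := forward_step p hp a
    rw [hψ0] at hfs
    -- a^p * ψ₁ ≤ a * spow (a-1) (p-1)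
    have h4 : a ^ p * ψ₁ ≤ a * spow (a-1) (p-1) := by linarith
    have h5 : a ^ p * spow (1 - 1/a) (p-1) = a * spow (a-1) (p-1) := by
      rw [show (1:ℝ) - 1/a = (a-1) * (1/a) by field_simp,
        spow_mul_rpow (by positivity : (0:ℝ) ≤ 1/a) hp1.ne', one_div,
        Real.inv_rpow ha.le]
      rw [show a ^ p * (spow (a-1) (p-1) * (a^(p-1))⁻¹)
          = spow (a-1) (p-1) * (a^p * (a^(p-1))⁻¹) by ring,
        ← Real.rpow_neg ha.le, ← Real.rpow_add ha,
        show p + -(p-1) = 1 by ring, Real.rpow_one]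
      ring
    have h6 : ψ₁ ≤ spow (1 - 1/a) (p-1) := by
      rw [← h5] at h4
      exact le_of_mul_le_mul_left (by linarith [h4] : a^p * ψ₁ ≤ a^p * spow (1-1/a) (p-1)) hap
    have h7 : B ≤ 1 - 1/a := by
      have := spow_mono hq1 h6
      simp only at this
      rw [spow_spow hp1, hpq1, spow_one_exp] at this
      exact this
    have h8 : 1/a ≤ 1 - B := by linarith
    calc (1:ℝ) = a * (1/a) := by field_simp
      _ ≤ a * (1 - B) := by
          apply mul_le_mul_of_nonneg_left h8 ha.le
      _ = (1 - A) * (1 - B) := by rw [ha']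
  · rintro ⟨h0, h1, hprod⟩ r s hr hs
    set A : ℝ := spow ψ₀ (q-1) with hA
    set B : ℝ := spow ψ₁ (q-1) with hB
    have hAlt : A < 1 := spow_lt_one h0 hq1
    have hBlt : B < 1 := spow_lt_one h1 hq1
    set a : ℝ := 1 - A with ha'
    set b : ℝ := 1 - B with hb'
    have ha : (0:ℝ) < a := by simp only [ha']; linarith
    have hb : (0:ℝ) < b := by simp only [hb']; linarith
    have hψ0 : ψ₀ = spow (1-a) (p-1) := by
      rw [show (1:ℝ) - a = A by rw [ha']; ring, hA, spow_spow hq1,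
        show (q-1)*(p-1) = 1 by linarith [hpq1], spow_one_exp]
    have hψ1 : ψ₁ = spow (1-b) (p-1) := by
      rw [show (1:ℝ) - b = B by rw [hb']; ring, hB, spow_spow hq1,
        show (q-1)*(p-1) = 1 by linarith [hpq1], spow_one_exp]
    have hble : 1 - b ≤ 1 - 1/a := by
      have : 1/a ≤ b := by rw [div_le_iff₀ ha]; nlinarith [hprod]
      linarith
    have hψ1le : ψ₁ ≤ spow (1 - 1/a) (p-1) := by
      rw [hψ1]; exact spow_mono hp1 hble
    set x : ℝ := r ^ (1/p) with hx'
    set y : ℝ := s ^ (1/p) with hy'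
    have hx : (0:ℝ) < x := Real.rpow_pos_of_pos hr _
    have hy : (0:ℝ) < y := Real.rpow_pos_of_pos hs _
    have hxp : x ^ p = r := by
      rw [hx', ← Real.rpow_mul hr.le, one_div_mul_cancel hp0.ne', Real.rpow_one]
    have hyp : y ^ p = s := by
      rw [hy', ← Real.rpow_mul hs.le, one_div_mul_cancel hp0.ne', Real.rpow_one]
    have hkey := key_lem p hp ha hx hy
    rw [hxp, hyp, ← hψ0] at hkey
    have : s * ψ₁ ≤ s * spow (1 - 1/a) (p-1) := mul_le_mul_of_nonneg_left hψ1le hs.le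
    calc r * ψ₀ + s * ψ₁ ≤ r * ψ₀ + s * spow (1 - 1/a) (p-1) := by linarith
      _ ≤ |x - y| ^ p := hkey
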